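/- Let $H$ be $\mu$-strongly convex ($\mu > 0$) on $[\ell,u]$ with minimizer $x^*$, and consider a multi-stage algorithm where stage $k$ runs $T_k = 2^{k+3}$ iterations of projected SGD with constant step size $\eta_k = \frac{1}{2^{k+1}\mu}$ starting from $\hat{x}^k$, outputting $\hat{x}^{k+1}$ satisfying $\mathbb{E}_k[H(\hat{x}^{k+1}) - H(x^*)] \le \frac{(\hat{x}^k - x^*)^2}{2\eta_k T_k} + \frac{\eta_k G^2}{2}$. Define $\Delta_k = H(\hat{x}^k) - H(x^*)$. Then by induction, $\mathbb{E}[\Delta_k] \le \frac{\Delta_1 + G^2/\mu}{2^{k-1}}$ for all $k \ge 1$, and after $K$ stages with a total of $T = \sum_{k=1}^K T_k$ iterations, $\mathbb{E}[H(\hat{x}^{K+1}) - H(x^*)] \le \frac{16(\Delta_1 + G^2/\mu)}{T}$. -/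

import Mathlib

open MeasureTheory Set Finset

/-- Multi-stage restarting (MCBA) under Assumption A5(a): `H` is `μ`-strongly convex
(`μ > 0`) on `[ℓ,u]` with minimizer `x*`; stage `k` runs `T_k = 2^{k+3}` iterations of
projected SGD with constant step size `η_k = 1/(2^{k+1} μ)` from `x̂^k`, returning
`x̂^{k+1}` with `E_k[H(x̂^{k+1}) - H(x*)] ≤ (x̂^k - x*)²/(2 η_k T_k) + η_k G²/2`.
With `Δ_k = H(x̂^k) - H(x*)`, one gets `E[Δ_k] ≤ (Δ_1 + G²/μ)/2^{k-1}` for all `k ≥ 1`,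
and after `K` stages, with `T = ∑_{k=1}^K T_k`,
`E[H(x̂^{K+1}) - H(x*)] ≤ 16 (Δ_1 + G²/μ)/T`. -/
theorem mcba_restart_rate
    {Ω : Type*} {m0 : MeasurableSpace Ω} {μ : Measure Ω} [IsProbabilityMeasure μ]
    (𝒢 : Filtration ℕ m0)
    (ℓ u : ℝ) (hlu : ℓ ≤ u)
    (H H' : ℝ → ℝ) (mu G : ℝ) (hmu : 0 < mu)
    (hderiv : ∀ y ∈ Icc ℓ u, HasDerivWithinAt H (H' y) (Icc ℓ u) y)
    (hsc : ∀ x₁ ∈ Icc ℓ u, ∀ x₂ ∈ Icc ℓ u,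
      H x₁ + H' x₁ * (x₂ - x₁) + mu / 2 * (x₂ - x₁) ^ 2 ≤ H x₂)
    (xstar : ℝ) (hxs : xstar ∈ Icc ℓ u) (hmin : ∀ y ∈ Icc ℓ u, H xstar ≤ H y)
    (xh : ℕ → Ω → ℝ) (x1 : ℝ)
    (hstart : ∀ ω, xh 1 ω = x1)
    (hmem : ∀ k ω, xh k ω ∈ Icc ℓ u)
    (hadapt : ∀ k, StronglyMeasurable[𝒢 k] (xh k))
    (hstage : ∀ k, 1 ≤ k →
      μ[(fun ω => H (xh (k + 1) ω) - H xstar) | 𝒢 k]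
        ≤ᵐ[μ] fun ω =>
          (xh k ω - xstar) ^ 2 / (2 * (1 / ((2:ℝ) ^ (k + 1) * mu)) * (2:ℝ) ^ (k + 3))
            + (1 / ((2:ℝ) ^ (k + 1) * mu)) * G ^ 2 / 2)
    (K : ℕ) (hK : 1 ≤ K) :
    (∀ k, 1 ≤ k →
        (∫ ω, (H (xh k ω) - H xstar) ∂μ)
          ≤ ((H x1 - H xstar) + G ^ 2 / mu) / 2 ^ (k - 1)) ∧
      (∫ ω, (H (xh (K + 1) ω) - H xstar) ∂μ)
        ≤ 16 * ((H x1 - H xstar) + G ^ 2 / mu)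
            / (∑ k ∈ Finset.Icc 1 K, ((2:ℝ) ^ (k + 3))) := by
  -- quadratic growth
  have qg : ∀ x ∈ Icc ℓ u, mu / 2 * (x - xstar) ^ 2 ≤ H x - H xstar := by
    intro x hx
    have hmin' : IsLocalMinOn H (Icc ℓ u) xstar := IsMinOn.localize (fun y hy => hmin y hy)
    have htan : x - xstar ∈ posTangentConeAt (Icc ℓ u) xstar :=
      sub_mem_posTangentConeAt_of_segment_subset ((convex_Icc ℓ u).segment_subset hxs hx)
    have h0 : (0:ℝ) ≤ (x - xstar) * H' xstar := by
      have := hmin'.hasFDerivWithinAt_nonneg (hderiv xstar hxs) htan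
      simpa using this
    have := hsc xstar hxs x hx
    nlinarith
  have hHcont : ContinuousOn H (Icc ℓ u) := fun y hy => (hderiv y hy).continuousWithinAt
  obtain ⟨C, hC⟩ := (isCompact_Icc).exists_bound_of_continuousOn hHcont
  -- measurability & integrability
  have hxm : ∀ k, Measurable (xh k) := fun k => ((hadapt k).mono (𝒢.le k)).measurable
  have hmeas : ∀ k, AEStronglyMeasurable (fun ω => H (xh k ω) - H xstar) μ := by
    intro k
    set g : ℝ → ℝ := fun y => H ((projIcc ℓ u hlu y : Icc ℓ u) : ℝ) with hg
    have hgc : Continuous g := hHcont.restrict.comp continuous_projIcc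
    have heq : (fun ω => H (xh k ω) - H xstar) = fun ω => g (xh k ω) - H xstar := by
      funext ω; rw [hg]; simp [projIcc_of_mem hlu (hmem k ω)]
    rw [heq]
    exact ((hgc.measurable.comp (hxm k)).sub measurable_const).aestronglyMeasurable
  have hint : ∀ k, Integrable (fun ω => H (xh k ω) - H xstar) μ := by
    intro k
    refine (integrable_const (C + |H xstar|)).mono' (hmeas k) (ae_of_all _ fun ω => ?_)
    have h1 := hC (xh k ω) (hmem k ω)
    rw [Real.norm_eq_abs] at h1 ⊢
    calc |H (xh k ω) - H xstar| ≤ |H (xh k ω)| + |H xstar| := abs_sub _ _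
      _ ≤ C + |H xstar| := by linarith
  have hdb : ∀ k ω, (xh k ω - xstar) ^ 2 ≤ (u - ℓ) ^ 2 := by
    intro k ω
    obtain ⟨h1, h2⟩ := hmem k ω
    obtain ⟨h3, h4⟩ := hxs
    nlinarith
  have hintd : ∀ k, Integrable (fun ω => (xh k ω - xstar) ^ 2) μ := by
    intro k
    refine (integrable_const ((u - ℓ) ^ 2)).mono'
      ((((hxm k).sub measurable_const).pow_const 2).aestronglyMeasurable)
      (ae_of_all _ fun ω => ?_)
    rw [Real.norm_eq_abs, abs_of_nonneg (sq_nonneg _)]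
    exact hdb k ω
  set D : ℝ := (H x1 - H xstar) + G ^ 2 / mu with hD
  have hne : Nonempty Ω := by
    by_contra h
    rw [not_nonempty_iff] at h
    have h1 : μ Set.univ = 1 := measure_univ
    rw [Set.eq_empty_of_isEmpty (Set.univ : Set Ω)] at h1
    simp at h1
  obtain ⟨ω0⟩ := hne
  have hx1 : x1 ∈ Icc ℓ u := hstart ω0 ▸ hmem 1 ω0
  have hD1 : 0 ≤ H x1 - H xstar := by linarith [hmin x1 hx1]
  have hG : 0 ≤ G ^ 2 / mu := div_nonneg (sq_nonneg _) hmu.le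
  have hD0 : 0 ≤ D := by positivity
  -- main induction
  have main : ∀ k, 1 ≤ k →
      (∫ ω, (H (xh k ω) - H xstar) ∂μ) ≤ D / 2 ^ (k - 1) := by
    intro k hk
    induction k, hk using Nat.le_induction with
    | base =>
      have : (fun ω => H (xh 1 ω) - H xstar) = fun _ => H x1 - H xstar := by
        funext ω; rw [hstart ω]
      rw [this, integral_const]
      simp only [measure_univ, probReal_univ, ENNReal.toReal_one, one_smul, pow_zero, Nat.sub_self]
      simp only [pow_zero, div_one]
      rw [hD]
      linarith
    | succ k hk IH =>
      obtain ⟨m, rfl⟩ : ∃ m, k = m + 1 := ⟨k - 1, (Nat.succ_pred_eq_of_pos hk).symm⟩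
      set k := m + 1
      set p : ℝ := (2:ℝ) ^ m with hp
      have hp0 : 0 < p := by positivity
      have hIH : (∫ ω, (H (xh k ω) - H xstar) ∂μ) ≤ D / p := by
        simpa [k, hp] using IH
      set c : ℝ := 2 * (1 / ((2:ℝ) ^ (k + 1) * mu)) * (2:ℝ) ^ (k + 3) with hc
      set b : ℝ := (1 / ((2:ℝ) ^ (k + 1) * mu)) * G ^ 2 / 2 with hb
      have hcval : c = 8 / mu := by
        rw [hc]
        have h1 : (2:ℝ) ^ (k + 3) = 2 ^ (k + 1) * 4 := by
          rw [show k + 3 = (k + 1) + 2 from rfl, pow_add]; norm_num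
        rw [h1]
        field_simp
        ring
      have hbval : b = G ^ 2 / (8 * p * mu) := by
        rw [hb]
        have h1 : (2:ℝ) ^ (k + 1) = 4 * p := by
          show (2:ℝ) ^ (m + 1 + 1) = 4 * p
          rw [hp, pow_add, pow_add]; ring
        rw [h1]
        have hpne : p ≠ 0 := hp0.ne'
        have hmne : mu ≠ 0 := hmu.ne'
        field_simp
        try ring
        try tauto
      have E1 : (∫ ω, (H (xh (k + 1) ω) - H xstar) ∂μ)
          = ∫ ω, (μ[(fun ω => H (xh (k + 1) ω) - H xstar) | 𝒢 k]) ω ∂μ :=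
        (integral_condExp (𝒢.le k)).symm
      have hRHSint : Integrable (fun ω => (xh k ω - xstar) ^ 2 / c + b) μ :=
        ((hintd k).div_const c).add (integrable_const b)
      have E2 : (∫ ω, (μ[(fun ω => H (xh (k + 1) ω) - H xstar) | 𝒢 k]) ω ∂μ)
          ≤ ∫ ω, ((xh k ω - xstar) ^ 2 / c + b) ∂μ :=
        integral_mono_ae integrable_condExp hRHSint (hstage k (by omega))
      have E3 : (∫ ω, ((xh k ω - xstar) ^ 2 / c + b) ∂μ)
          = (∫ ω, (xh k ω - xstar) ^ 2 ∂μ) / c + b := by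
        rw [integral_add ((hintd k).div_const c) (integrable_const b), integral_const,
          integral_div]
        simp
      have E4 : (∫ ω, (xh k ω - xstar) ^ 2 ∂μ)
          ≤ (2 / mu) * ∫ ω, (H (xh k ω) - H xstar) ∂μ := by
        rw [← integral_const_mul]
        refine integral_mono (hintd k) ((hint k).const_mul _) fun ω => ?_
        have hqg := qg (xh k ω) (hmem k ω)
        have hpos : (0:ℝ) ≤ 2 / mu := by positivity
        have hmul := mul_le_mul_of_nonneg_left hqg hpos
        have hone : 2 / mu * (mu / 2) = 1 := by field_simp
        calc (xh k ω - xstar) ^ 2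
            = (2 / mu * (mu / 2)) * (xh k ω - xstar) ^ 2 := by rw [hone]; ring
          _ = 2 / mu * (mu / 2 * (xh k ω - xstar) ^ 2) := by ring
          _ ≤ 2 / mu * (H (xh k ω) - H xstar) := hmul
      have hEd : (∫ ω, (xh k ω - xstar) ^ 2 ∂μ) ≤ (2 / mu) * (D / p) := by
        refine E4.trans ?_
        exact mul_le_mul_of_nonneg_left hIH (by positivity)
      have goal2 : (2 / mu) * (D / p) / c + b ≤ D / 2 ^ (k + 1 - 1) := by
        have h2 : (2:ℝ) ^ (k + 1 - 1) = 2 * p := by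
          show (2:ℝ) ^ (m + 1) = 2 * p
          rw [hp]; ring
        rw [h2, hcval, hbval]
        have hGD : G ^ 2 / mu ≤ D := by rw [hD]; linarith
        have e1 : (2 / mu) * (D / p) / (8 / mu) = D / (4 * p) := by
          have hpne : p ≠ 0 := hp0.ne'
          have hmne : mu ≠ 0 := hmu.ne'
          field_simp
          ring
        have e2 : G ^ 2 / (8 * p * mu) = (G ^ 2 / mu) / (8 * p) := by
          rw [div_div]; ring_nf
        rw [e1, e2]
        rw [div_add_div _ _ (by positivity) (by positivity),
          div_le_div_iff₀ (by positivity) (by positivity)]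
        nlinarith [mul_pos hp0 hp0, hp0, hD0, hGD, div_nonneg (sq_nonneg G) hmu.le]
      calc (∫ ω, (H (xh (k + 1) ω) - H xstar) ∂μ)
          = ∫ ω, (μ[(fun ω => H (xh (k + 1) ω) - H xstar) | 𝒢 k]) ω ∂μ := E1
        _ ≤ ∫ ω, ((xh k ω - xstar) ^ 2 / c + b) ∂μ := E2
        _ = (∫ ω, (xh k ω - xstar) ^ 2 ∂μ) / c + b := E3
        _ ≤ (2 / mu) * (D / p) / c + b := by
            have hc0 : (0:ℝ) < c := by rw [hcval]; positivity
            gcongr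
        _ ≤ D / 2 ^ (k + 1 - 1) := goal2
  refine ⟨main, ?_⟩
  have hTsum : ∀ n, 1 ≤ n → (∑ k ∈ Finset.Icc 1 n, ((2:ℝ) ^ (k + 3))) = 2 ^ (n + 4) - 16 := by
    intro n hn
    induction n, hn using Nat.le_induction with
    | base => norm_num
    | succ n hn IH =>
      rw [Finset.sum_Icc_succ_top (by omega : 1 ≤ n + 1), IH]
      rw [show n + 1 + 4 = (n + 4) + 1 from rfl, pow_succ,
        show n + 1 + 3 = (n + 4) from rfl]
      ring
  set T : ℝ := ∑ k ∈ Finset.Icc 1 K, ((2:ℝ) ^ (k + 3)) with hT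
  have hTval : T = 2 ^ (K + 4) - 16 := hTsum K hK
  have hT0 : (0:ℝ) < T := by
    rw [hTval]
    have : (16:ℝ) ≤ 2 ^ (K + 4) := by
      calc (16:ℝ) = 2 ^ 4 := by norm_num
        _ ≤ 2 ^ (K + 4) := by
          apply pow_le_pow_right₀ (by norm_num) (by omega)
    have h2 : (2:ℝ) ^ 4 < 2 ^ (K + 4) := by
      apply pow_lt_pow_right₀ (by norm_num) (by omega)
    norm_num at h2 ⊢
    linarith
  have hTle : T ≤ 2 ^ (K + 4) := by rw [hTval]; linarith
  have h1 : (∫ ω, (H (xh (K + 1) ω) - H xstar) ∂μ) ≤ D / 2 ^ K := by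
    simpa using main (K + 1) (by omega)
  refine h1.trans ?_
  have e1 : D / 2 ^ K = 16 * D / 2 ^ (K + 4) := by
    rw [pow_add]
    norm_num
    ring
  rw [e1]
  apply div_le_div_of_nonneg_left (by positivity) hT0 hTle
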